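/- Let d be a power of 2 and d' = d + log₂ d. Let h : {0,1}^{d'} → ℝ be any function of the form h(x) = Σ_{b=d+1}^{d'} 3^b·x_b + Σ_{b=1}^{d} c_b(x)·3^b·x_b, where each c_b : {0,1}^{d'} → {−1,0,+1} is an arbitrary function. Then for every x ∈ C_i and y ∈ C_j with i < j, we have h(x) < h(y). -/

import Mathlib

open Finset

lemma geom_lt_nat (r n : ℕ) (hr : 2 ≤ r) : (∑ t ∈ Finset.range n, r ^ t) < r ^ n := by
  induction n with
  | zero => simp
  | succ n ih =>
    rw [Finset.sum_range_succ, pow_succ]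
    have : r ^ n * 2 ≤ r ^ n * r := Nat.mul_le_mul_left _ hr
    omega

lemma bitsum_lt (r p : ℕ) (hr : 2 ≤ r) (a : Fin p → Bool) :
    (∑ t : Fin p, if a t then r ^ (t : ℕ) else 0) < r ^ p := by
  calc (∑ t : Fin p, if a t then r ^ (t : ℕ) else 0)
      ≤ ∑ t : Fin p, r ^ (t : ℕ) := by
        apply Finset.sum_le_sum; intro t _; split <;> simp
    _ = ∑ t ∈ Finset.range p, r ^ t := by rw [Fin.sum_univ_eq_sum_range]
    _ < r ^ p := geom_lt_nat r p hr

lemma bits_mono {p : ℕ} (a b : Fin p → Bool)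
    (h : (∑ t : Fin p, if a t then 2 ^ (t : ℕ) else 0) <
         ∑ t : Fin p, if b t then 2 ^ (t : ℕ) else 0) :
    (∑ t : Fin p, if a t then 3 ^ (t : ℕ) else 0) <
      ∑ t : Fin p, if b t then 3 ^ (t : ℕ) else 0 := by
  induction p with
  | zero => simp at h
  | succ p ih =>
    simp only [Fin.sum_univ_castSucc] at h ⊢
    simp only [Fin.coe_castSucc, Fin.val_last] at h ⊢
    have hA2 := bitsum_lt 2 p (le_refl 2) (fun t => a t.castSucc)
    have hB2 := bitsum_lt 2 p (le_refl 2) (fun t => b t.castSucc)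
    have hA3 := bitsum_lt 3 p (by norm_num) (fun t => a t.castSucc)
    have hB3 := bitsum_lt 3 p (by norm_num) (fun t => b t.castSucc)
    cases ha : a (Fin.last p) <;> cases hb : b (Fin.last p) <;>
      simp only [ha, hb, if_true, if_false, Bool.false_eq_true] at h ⊢
    · exact ih _ _ h
    · have := ih (fun t => a t.castSucc) (fun t => b t.castSucc)
      omega
    · omega
    · have h' : (∑ t : Fin p, if a t.castSucc then 2 ^ (t:ℕ) else 0) <
          ∑ t : Fin p, if b t.castSucc then 2 ^ (t:ℕ) else 0 := by omega
      have := ih _ _ h'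
      omega

lemma Ssum (d : ℕ) : (∑ i ∈ Finset.range d, (3:ℝ)^(i+1)) * 2 = 3^(d+1) - 3 := by
  induction d with
  | zero => norm_num
  | succ n ih =>
    rw [Finset.sum_range_succ]
    have h3 : (3:ℝ)^(n+1+1) = 3 * 3^(n+1) := by ring
    rw [h3]; linarith


/-- The index (in `{0, …, d-1}`, corresponding to the paper's `{1, …, d}`) of the subcube
containing `x ∈ {0,1}^{d+p}`, determined by the top `p` coordinates:
`∑_{t=1}^{p} x_{d+t} · 2^{t-1}`. -/
def subcubeIdx (d p : ℕ) (x : Fin (d + p) → Bool) : ℕ :=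
  ∑ t : Fin p, if x ⟨d + t.1, Nat.add_lt_add_left t.2 d⟩ then 2 ^ t.1 else 0

/-- A function on the hypercube `{0,1}^m` is unate if it is `b`-monotone for some
`b ∈ {0,1}^m`: nondecreasing in every coordinate `j` with `b_j = 0` and nonincreasing in
every coordinate `j` with `b_j = 1`. -/
def IsUnate {m : ℕ} (h : (Fin m → Bool) → ℝ) : Prop :=
  ∃ σ : Fin m → Bool, ∀ j : Fin m, ∀ x : Fin m → Bool,
    if σ j then h (Function.update x j true) ≤ h (Function.update x j false)
    else h (Function.update x j false) ≤ h (Function.update x j true)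

/-- The `Yes`-distribution function: `f(x) = ∑_{b ∉ R} x_b 3^b + α_{r_i} x_{r_i} 3^{r_i}`
on the subcube `C_i` containing `x`.  (Lean coordinate `b : Fin (d+p)` stands for the
paper's coordinate `b + 1`, with weight `3^(b+1)`.) -/
noncomputable def fYes (d p : ℕ) (R : Finset (Fin (d + p))) (r : ℕ → Fin (d + p))
    (α : Fin (d + p) → ℝ) (x : Fin (d + p) → Bool) : ℝ :=
  (∑ b ∈ Finset.univ \ R, if x b then (3 : ℝ) ^ ((b : ℕ) + 1) else 0) +
    α (r (subcubeIdx d p x)) *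
      (if x (r (subcubeIdx d p x)) then (3 : ℝ) ^ (((r (subcubeIdx d p x)) : ℕ) + 1) else 0)

/-- The `No`-distribution function: `g(x) = ∑_{b ∉ R} x_b 3^b + β_i x_{r_i} 3^{r_i}`
on the subcube `C_i` containing `x`. -/
noncomputable def gNo (d p : ℕ) (R : Finset (Fin (d + p))) (r : ℕ → Fin (d + p))
    (β : ℕ → ℝ) (x : Fin (d + p) → Bool) : ℝ :=
  (∑ b ∈ Finset.univ \ R, if x b then (3 : ℝ) ^ ((b : ℕ) + 1) else 0) +
    β (subcubeIdx d p x) *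
      (if x (r (subcubeIdx d p x)) then (3 : ℝ) ^ (((r (subcubeIdx d p x)) : ℕ) + 1) else 0)

/-- For any function of the form
`h(x) = ∑_{b=d+1}^{d'} 3^b x_b + ∑_{b=1}^{d} c_b(x) 3^b x_b` with `c_b(x) ∈ {-1,0,1}`,
points in an earlier subcube have strictly smaller value: `x ∈ C_i`, `y ∈ C_j`, `i < j`
implies `h(x) < h(y)`. -/
theorem stmt9 (p d : ℕ) (hd : d = 2 ^ p)
    (c : Fin (d + p) → (Fin (d + p) → Bool) → ℝ)
    (hc : ∀ b x, c b x = -1 ∨ c b x = 0 ∨ c b x = 1)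
    (h : (Fin (d + p) → Bool) → ℝ)
    (hh : ∀ x, h x =
      (∑ b : Fin (d + p), if d ≤ (b : ℕ) then (if x b then (3 : ℝ) ^ ((b : ℕ) + 1) else 0) else 0)
      + ∑ b : Fin (d + p), if (b : ℕ) < d then
          c b x * (if x b then (3 : ℝ) ^ ((b : ℕ) + 1) else 0) else 0)
    (x y : Fin (d + p) → Bool) (i j : ℕ) (hi : i < d) (hj : j < d)
    (hxi : subcubeIdx d p x = i) (hyj : subcubeIdx d p y = j) (hij : i < j) :
    h x < h y := by
  -- top sum equals 3^(d+1) * (base-3 encoding of the top bits)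
  have key : ∀ z : Fin (d+p) → Bool,
      (∑ b : Fin (d + p), if d ≤ (b : ℕ) then (if z b then (3 : ℝ) ^ ((b : ℕ) + 1) else 0) else 0)
      = 3 ^ (d+1) * ((∑ t : Fin p, if z (Fin.natAdd d t) then 3 ^ (t:ℕ) else 0 : ℕ) : ℝ) := by
    intro z
    rw [Fin.sum_univ_add]
    have h1 : (∑ i : Fin d, if d ≤ ((Fin.castAdd p i : Fin (d+p)) : ℕ) then
        (if z (Fin.castAdd p i) then (3:ℝ)^(((Fin.castAdd p i : Fin (d+p)):ℕ)+1) else 0) else 0)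
        = 0 := by
      apply Finset.sum_eq_zero; intro i _
      simp [Fin.coe_castAdd, Nat.not_le.mpr i.2]
    rw [h1, zero_add]
    push_cast
    rw [Finset.mul_sum]
    apply Finset.sum_congr rfl
    intro t _
    simp only [Fin.coe_natAdd]
    rw [if_pos (Nat.le_add_right d t.1)]
    split <;> ring
  -- bound on the low part
  have low_bound : ∀ z : Fin (d+p) → Bool,
      |∑ b : Fin (d + p), if (b : ℕ) < d then
          c b z * (if z b then (3 : ℝ) ^ ((b : ℕ) + 1) else 0) else 0|
        ≤ ∑ i ∈ Finset.range d, (3:ℝ)^(i+1) := by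
    intro z
    calc |∑ b : Fin (d + p), if (b : ℕ) < d then
          c b z * (if z b then (3 : ℝ) ^ ((b : ℕ) + 1) else 0) else 0|
        ≤ ∑ b : Fin (d + p), |if (b : ℕ) < d then
          c b z * (if z b then (3 : ℝ) ^ ((b : ℕ) + 1) else 0) else 0| :=
          Finset.abs_sum_le_sum_abs _ _
      _ ≤ ∑ b : Fin (d + p), (if (b : ℕ) < d then (3:ℝ)^((b:ℕ)+1) else 0) := by
          apply Finset.sum_le_sum; intro b _
          have hp : (0:ℝ) ≤ 3^((b:ℕ)+1) := by positivity
          split_ifs with hb hz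
          · rcases hc b z with h'|h'|h' <;> rw [h'] <;> simp [abs_of_nonneg hp]
          · simp
          · simp
      _ = ∑ i ∈ Finset.range d, (3:ℝ)^(i+1) := by
          rw [Fin.sum_univ_add]
          have h2 : (∑ t : Fin p, if ((Fin.natAdd d t : Fin (d+p)) : ℕ) < d then
              (3:ℝ)^(((Fin.natAdd d t : Fin (d+p)):ℕ)+1) else 0) = 0 := by
            apply Finset.sum_eq_zero; intro t _
            simp [Fin.coe_natAdd]
          rw [h2, add_zero]
          rw [show (∑ i : Fin d, if ((Fin.castAdd p i : Fin (d+p)) : ℕ) < d then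
              (3:ℝ)^(((Fin.castAdd p i : Fin (d+p)):ℕ)+1) else 0)
              = ∑ i : Fin d, (3:ℝ)^((i:ℕ)+1) from
            Finset.sum_congr rfl fun i _ => by simp [Fin.coe_castAdd, i.2]]
          exact Fin.sum_univ_eq_sum_range (fun i => (3:ℝ)^(i+1)) d
  -- gap between top encodings
  have hN : (∑ t : Fin p, if x (Fin.natAdd d t) then 3 ^ (t:ℕ) else 0) <
      (∑ t : Fin p, if y (Fin.natAdd d t) then 3 ^ (t:ℕ) else 0) := by
    apply bits_mono (fun t => x (Fin.natAdd d t)) (fun t => y (Fin.natAdd d t))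
    have ex : (∑ t : Fin p, if x (Fin.natAdd d t) then 2 ^ (t:ℕ) else 0) = i := hxi
    have ey : (∑ t : Fin p, if y (Fin.natAdd d t) then 2 ^ (t:ℕ) else 0) = j := hyj
    omega
  rw [hh x, hh y, key x, key y]
  have hLx := abs_le.mp (low_bound x)
  have hLy := abs_le.mp (low_bound y)
  have hS := Ssum d
  have hN' : ((∑ t : Fin p, if x (Fin.natAdd d t) then 3 ^ (t:ℕ) else 0 : ℕ) : ℝ) + 1 ≤
      ((∑ t : Fin p, if y (Fin.natAdd d t) then 3 ^ (t:ℕ) else 0 : ℕ) : ℝ) := by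
    exact_mod_cast hN
  have hpow : (0:ℝ) < 3^(d+1) := by positivity
  nlinarith [mul_le_mul_of_nonneg_left hN' (le_of_lt hpow)]
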